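/- Let e ≥ 5. The numerical semigroup ⟨e, e+1, 2e-1⟩ (the Sally type semigroup S_{e-3}^e(2)) is symmetric if and only if e ≡ 2 (mod 3). -/

import Mathlib

/-- The set of gaps of a numerical semigroup (submonoid of ℕ). -/
def gapsOf (S : AddSubmonoid ℕ) : Set ℕ := {n | n ∉ S}

/-- The Frobenius number: the largest gap. -/
noncomputable def frobeniusNumber (S : AddSubmonoid ℕ) : ℕ := sSup (gapsOf S)

/-- The genus: the number of gaps. -/
noncomputable def genusOf (S : AddSubmonoid ℕ) : ℕ := Nat.card (gapsOf S)

/-- A numerical semigroup is symmetric iff 2g = F + 1. -/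
def IsSymmetricNS (S : AddSubmonoid ℕ) : Prop :=
  2 * genusOf S = frobeniusNumber S + 1

/-- The Sally type semigroup `S_k^e(j) = ⟨e,…,e+j-1, e+j+k,…,2e-1⟩`. -/
def sally (e k j : ℕ) : AddSubmonoid ℕ :=
  AddSubmonoid.closure (Set.Ico e (e + j) ∪ Set.Ico (e + j + k) (2 * e))


/-- count of gaps in residue class r -/
def cntNS (e r : ℕ) : ℕ := min r (2 * e - 1 - 2 * r)

/-- the Apéry-type value for residue class of n -/
def WNS (e n : ℕ) : ℕ := cntNS e (n % e) * e + n % e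

lemma WNS_min (e n : ℕ) (he : 1 ≤ e) :
    WNS e n = min ((n % e) * (e + 1)) ((e - n % e) * (2 * e - 1)) := by
  have hr : n % e < e := Nat.mod_lt _ he
  set r := n % e with hrdef
  have h1 : r * (e + 1) = r * e + r := by ring
  have h2 : (e - r) * (2 * e - 1) = (2 * e - 1 - 2 * r) * e + r := by
    zify [show r ≤ e from hr.le, show 2 * r ≤ 2 * e - 1 by omega, show 1 ≤ 2 * e by omega]
    ring
  rw [h1, h2, WNS, cntNS]
  rcases le_total r (2 * e - 1 - 2 * r) with h | h
  · rw [min_eq_left h, min_eq_left (by have := Nat.mul_le_mul_right e h; omega)]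
  · rw [min_eq_right h, min_eq_right (by have := Nat.mul_le_mul_right e h; omega)]

lemma WNS_add_le (e a b : ℕ) (he : 1 ≤ e) : WNS e (a + b) ≤ WNS e a + WNS e b := by
  have hr : a % e < e := Nat.mod_lt _ he
  have hs : b % e < e := Nat.mod_lt _ he
  have hab : (a + b) % e = (a % e + b % e) % e := by
    rw [Nat.add_mod]
  rw [WNS, WNS, WNS, hab]
  set r := a % e
  set s := b % e
  rcases Nat.lt_or_ge (r + s) e with h | h
  · rw [Nat.mod_eq_of_lt h]
    have key : cntNS e (r + s) ≤ cntNS e r + cntNS e s := by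
      simp only [cntNS]; omega
    have := Nat.mul_le_mul_right e key
    have h2 : (cntNS e r + cntNS e s) * e = cntNS e r * e + cntNS e s * e := by ring
    omega
  · have h0 : (r + s) % e = r + s - e := by
      rw [Nat.mod_eq_sub_mod h, Nat.mod_eq_of_lt (by omega)]
    rw [h0]
    have key : cntNS e (r + s - e) ≤ cntNS e r + cntNS e s + 1 := by
      simp only [cntNS]; omega
    have := Nat.mul_le_mul_right e key
    have h2 : (cntNS e r + cntNS e s + 1) * e = cntNS e r * e + cntNS e s * e + e := by ring
    omega

lemma mem_closure_iff_WNS (e : ℕ) (he : 5 ≤ e) (n : ℕ) :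
    n ∈ AddSubmonoid.closure ({e, e + 1, 2 * e - 1} : Set ℕ) ↔ WNS e n ≤ n := by
  have he1 : 1 ≤ e := by omega
  constructor
  · intro hn
    induction hn using AddSubmonoid.closure_induction with
    | mem x hx =>
      rcases hx with h | h | h
      · subst h; rw [WNS]; simp [Nat.mod_self, cntNS]
      · subst h
        rw [WNS_min e _ he1]
        have : (e + 1) % e = 1 := by
          rw [Nat.add_mod_left, Nat.mod_eq_of_lt (by omega)]
        rw [this]
        have : 1 * (e + 1) = e + 1 := by ring
        rw [this]
        exact le_trans (min_le_left _ _) le_rfl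
      · subst h
        rw [WNS_min e _ he1]
        have h1 : (2 * e - 1) % e = e - 1 := by
          have : 2 * e - 1 = e + (e - 1) := by omega
          rw [this, Nat.add_mod_left, Nat.mod_eq_of_lt (by omega)]
        rw [h1]
        have h2 : e - (e - 1) = 1 := by omega
        rw [h2]
        have : 1 * (2 * e - 1) = 2 * e - 1 := by ring
        rw [this]
        exact le_trans (min_le_right _ _) le_rfl
    | zero => simp [WNS, cntNS]
    | add x y hx hy ihx ihy => exact le_trans (WNS_add_le e x y he1) (by omega)
  · intro hn
    have hmem1 : e ∈ AddSubmonoid.closure ({e, e + 1, 2 * e - 1} : Set ℕ) :=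
      AddSubmonoid.subset_closure (by simp)
    have hmem2 : e + 1 ∈ AddSubmonoid.closure ({e, e + 1, 2 * e - 1} : Set ℕ) :=
      AddSubmonoid.subset_closure (by simp)
    have hmem3 : 2 * e - 1 ∈ AddSubmonoid.closure ({e, e + 1, 2 * e - 1} : Set ℕ) :=
      AddSubmonoid.subset_closure (by simp)
    have hr : n % e < e := Nat.mod_lt _ he1
    have hq : n = e * (n / e) + n % e := (Nat.div_add_mod n e).symm
    set r := n % e
    set q := n / e
    rw [WNS_min e _ he1] at hn
    rcases le_total (r * (e + 1)) ((e - r) * (2 * e - 1)) with h | h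
    · rw [min_eq_left h] at hn
      have hrq : r ≤ q := by nlinarith
      have key : n = r * (e + 1) + (q - r) * e := by
        zify [hrq]
        rw [hq]; push_cast; ring
      rw [key]
      exact AddSubmonoid.add_mem _
        (by simpa [nsmul_eq_mul] using nsmul_mem hmem2 r)
        (by simpa [nsmul_eq_mul] using nsmul_mem hmem1 (q - r))
    · rw [min_eq_right h] at hn
      have hB : (e - r) * (2 * e - 1) = (2 * e - 1 - 2 * r) * e + r := by
        zify [show r ≤ e from hr.le, show 2 * r ≤ 2 * e - 1 by omega, show 1 ≤ 2 * e by omega]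
        ring
      have hrq : 2 * e - 1 - 2 * r ≤ q := by
        rw [hB] at hn; nlinarith
      have key : n = (e - r) * (2 * e - 1) + (q - (2 * e - 1 - 2 * r)) * e := by
        rw [hB]
        zify [hrq]
        rw [hq]; push_cast; ring
      rw [key]
      exact AddSubmonoid.add_mem _
        (by simpa [nsmul_eq_mul] using nsmul_mem hmem3 (e - r))
        (by simpa [nsmul_eq_mul] using nsmul_mem hmem1 (q - (2 * e - 1 - 2 * r)))

def gapsFin (e : ℕ) : Finset ℕ :=
  (Finset.range e).biUnion fun r => (Finset.range (cntNS e r)).image fun j => j * e + r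

lemma mem_gapsFin (e : ℕ) (he : 1 ≤ e) (n : ℕ) :
    n ∈ gapsFin e ↔ n < WNS e n := by
  simp only [gapsFin, Finset.mem_biUnion, Finset.mem_image, Finset.mem_range]
  constructor
  · rintro ⟨r, hr, j, hj, rfl⟩
    have hmod : (j * e + r) % e = r := by
      rw [Nat.mul_add_mod' j e r, Nat.mod_eq_of_lt hr]
    rw [WNS, hmod]
    have := Nat.mul_le_mul_right e (show j + 1 ≤ cntNS e r from hj)
    have h2 : (j + 1) * e = j * e + e := by ring
    omega
  · intro hn
    rw [WNS] at hn
    have hq : n = n % e + n / e * e := (Nat.mod_add_div' n e).symm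
    refine ⟨n % e, Nat.mod_lt _ he, n / e, ?_, by omega⟩
    by_contra hcon
    push_neg at hcon
    have := Nat.mul_le_mul_right e hcon
    omega

lemma gaps_eq (e : ℕ) (he : 5 ≤ e) :
    gapsOf (AddSubmonoid.closure ({e, e + 1, 2 * e - 1} : Set ℕ)) = ↑(gapsFin e) := by
  ext n
  simp only [gapsOf, Set.mem_setOf_eq, Finset.mem_coe]
  rw [mem_gapsFin e (by omega), mem_closure_iff_WNS e he n]
  exact not_le

lemma card_gapsFin (e : ℕ) (he : 1 ≤ e) :
    (gapsFin e).card = ∑ r ∈ Finset.range e, cntNS e r := by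
  rw [gapsFin, Finset.card_biUnion]
  · refine Finset.sum_congr rfl fun r _ => ?_
    rw [Finset.card_image_of_injective _
      (fun a b hab => Nat.eq_of_mul_eq_mul_right he (by omega)), Finset.card_range]
  · intro r hr r' hr' hne
    simp only [Finset.mem_coe, Finset.mem_range] at hr hr'
    show Disjoint _ _
    rw [Finset.disjoint_left]
    rintro x hx hx'
    simp only [Finset.mem_image, Finset.mem_range] at hx hx'
    obtain ⟨j, hj, rfl⟩ := hx
    obtain ⟨j', hj', he'⟩ := hx'
    have h1 : (j * e + r) % e = r := by rw [Nat.mul_add_mod' j e r, Nat.mod_eq_of_lt hr]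
    have h2 : (j' * e + r') % e = r' := by rw [Nat.mul_add_mod' j' e r', Nat.mod_eq_of_lt hr']
    rw [he'] at h2
    exact hne (by omega)

lemma sum_odd (s : ℕ) : ∑ j ∈ Finset.range s, (2 * s - 1 - 2 * j) = s * s := by
  induction s with
  | zero => simp
  | succ s ih =>
    rw [Finset.sum_range_succ']
    have h1 : ∀ i ∈ Finset.range s, (2 * (s + 1) - 1 - 2 * (i + 1)) = 2 * s - 1 - 2 * i := by
      intro i _; omega
    rw [Finset.sum_congr rfl h1, ih]
    have : 2 * (s + 1) - 1 - 2 * 0 = 2 * s + 1 := by omega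
    rw [this]; ring

lemma two_sum_cnt (e : ℕ) (he : 5 ≤ e) :
    2 * ∑ r ∈ Finset.range e, cntNS e r
      = (2 * e - 1) / 3 * ((2 * e - 1) / 3 + 1) + 2 * (e - 1 - (2 * e - 1) / 3) ^ 2 := by
  set t := (2 * e - 1) / 3 with ht
  have ht3 : 3 * t ≤ 2 * e - 1 ∧ 2 * e - 1 < 3 * t + 3 := by omega
  have h1 : t + 1 ≤ e := by omega
  rw [Finset.range_eq_Ico, ← Finset.sum_Ico_consecutive _ (Nat.zero_le (t + 1)) h1]
  have hA : ∑ r ∈ Finset.Ico 0 (t + 1), cntNS e r = ∑ r ∈ Finset.range (t + 1), r := by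
    rw [← Finset.range_eq_Ico]
    refine Finset.sum_congr rfl fun r hr => ?_
    simp only [Finset.mem_range] at hr
    simp only [cntNS]; omega
  have hB : ∑ r ∈ Finset.Ico (t + 1) e, cntNS e r = (e - 1 - t) * (e - 1 - t) := by
    rw [Finset.sum_Ico_eq_sum_range]
    rw [← sum_odd (e - 1 - t), show e - (t + 1) = e - 1 - t by omega]
    refine Finset.sum_congr rfl fun j hj => ?_
    simp only [Finset.mem_range] at hj
    simp only [cntNS]; omega
  rw [hA, hB]
  have hG : (∑ i ∈ Finset.range (t + 1), i) * 2 = t * (t + 1) := by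
    have := Finset.sum_range_id_mul_two (t + 1)
    simp only [Nat.add_sub_cancel] at this
    rw [Nat.mul_comm (t + 1) t] at this
    exact this
  have hsq : (e - 1 - t) ^ 2 = (e - 1 - t) * (e - 1 - t) := by ring
  rw [hsq]
  omega

lemma genus_eq (e : ℕ) (he : 5 ≤ e) :
    genusOf (AddSubmonoid.closure ({e, e + 1, 2 * e - 1} : Set ℕ))
      = ∑ r ∈ Finset.range e, cntNS e r := by
  rw [genusOf, gaps_eq e he, Nat.card_coe_set_eq, Set.ncard_coe_finset,
    card_gapsFin e (by omega)]

lemma gaps_nonempty (e : ℕ) (he : 5 ≤ e) :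
    (gapsOf (AddSubmonoid.closure ({e, e + 1, 2 * e - 1} : Set ℕ))).Nonempty := by
  refine ⟨1, ?_⟩
  rw [gaps_eq e he]
  rw [Finset.mem_coe, mem_gapsFin e (by omega), WNS]
  have h1 : 1 % e = 1 := Nat.mod_eq_of_lt (by omega)
  rw [h1]
  have : cntNS e 1 = 1 := by
    rw [cntNS]; omega
  rw [this]; omega

lemma frob_le (e : ℕ) (he : 5 ≤ e) (B : ℕ)
    (hB : ∀ r j, r < e → j + 1 ≤ cntNS e r → j * e + r ≤ B) :
    frobeniusNumber (AddSubmonoid.closure ({e, e + 1, 2 * e - 1} : Set ℕ)) ≤ B := by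
  rw [frobeniusNumber]
  apply csSup_le (gaps_nonempty e he)
  intro n hn
  rw [gaps_eq e he, Finset.mem_coe, gapsFin, Finset.mem_biUnion] at hn
  obtain ⟨r, hr, hn⟩ := hn
  rw [Finset.mem_image] at hn
  obtain ⟨j, hj, rfl⟩ := hn
  rw [Finset.mem_range] at hr hj
  exact hB r j hr hj

lemma frob_eq (e : ℕ) (he : 5 ≤ e) (F : ℕ) (r j : ℕ) (hr : r < e)
    (hj : j + 1 ≤ cntNS e r) (hF : j * e + r = F)
    (hB : ∀ r j, r < e → j + 1 ≤ cntNS e r → j * e + r ≤ F) :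
    frobeniusNumber (AddSubmonoid.closure ({e, e + 1, 2 * e - 1} : Set ℕ)) = F := by
  apply le_antisymm (frob_le e he F hB)
  apply le_csSup
  · refine ⟨F, ?_⟩
    rintro n hn
    rw [gaps_eq e he, Finset.mem_coe, gapsFin, Finset.mem_biUnion] at hn
    obtain ⟨r', hr', hn⟩ := hn
    rw [Finset.mem_image] at hn
    obtain ⟨j', hj', rfl⟩ := hn
    rw [Finset.mem_range] at hr' hj'
    exact hB r' j' hr' hj'
  · rw [gaps_eq e he, Finset.mem_coe, gapsFin, Finset.mem_biUnion]
    exact ⟨r, Finset.mem_range.mpr hr, Finset.mem_image.mpr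
      ⟨j, Finset.mem_range.mpr hj, hF⟩⟩

set_option maxHeartbeats 1600000 in
theorem sally_e_em3_2_symmetric_iff (e : ℕ) (he : 5 ≤ e) :
    IsSymmetricNS (AddSubmonoid.closure {e, e + 1, 2 * e - 1}) ↔ e % 3 = 2 := by
  have h2g : 2 * genusOf (AddSubmonoid.closure ({e, e + 1, 2 * e - 1} : Set ℕ))
      = (2 * e - 1) / 3 * ((2 * e - 1) / 3 + 1) + 2 * (e - 1 - (2 * e - 1) / 3) ^ 2 := by
    rw [genus_eq e he, two_sum_cnt e he]
  rw [IsSymmetricNS]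
  have hcase : e % 3 = 0 ∨ e % 3 = 1 ∨ e % 3 = 2 := by omega
  rcases hcase with h0 | h1 | h2
  · -- e = 3m, not symmetric
    obtain ⟨m, hm2, rfl⟩ : ∃ m, 2 ≤ m ∧ e = 3 * m := ⟨e / 3, by omega, by omega⟩
    have ht : (2 * (3 * m) - 1) / 3 = 2 * m - 1 := by omega
    have hs : 3 * m - 1 - (2 * m - 1) = m := by omega
    rw [ht, hs] at h2g
    have hpoly : (2 * m - 1) * (2 * m - 1 + 1) + 2 * m ^ 2 = 6 * m ^ 2 - 2 * m := by
      zify [show 1 ≤ 2 * m by omega, show 2 * m ≤ 6 * m ^ 2 by nlinarith]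
      ring
    rw [hpoly] at h2g
    have hF : frobeniusNumber (AddSubmonoid.closure ({3 * m, 3 * m + 1, 2 * (3 * m) - 1} : Set ℕ))
        ≤ 6 * m ^ 2 - 4 * m := by
      apply frob_le _ he
      intro r j hr hj
      rw [cntNS] at hj
      have c1 : (j:ℤ) + 1 ≤ (r:ℤ) := by omega
      have c2 : (j:ℤ) + 2 * r + 2 ≤ 6 * (m:ℤ) := by omega
      have c3 : (j:ℤ) + 2 ≤ 2 * (m:ℤ) := by omega
      have H : (j:ℤ) * (3 * m) + r ≤ 6 * (m:ℤ) ^ 2 - 4 * m := by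
        nlinarith [mul_nonneg (show (0:ℤ) ≤ 6 * m - 1 by linarith)
          (show (0:ℤ) ≤ 2 * m - 2 - j by linarith)]
      zify [show 4 * m ≤ 6 * m ^ 2 by nlinarith]
      push_cast
      linarith [H]
    constructor
    · intro hsym
      exfalso
      have e2 : 4 * m + 4 ≤ 6 * m ^ 2 := by nlinarith
      omega
    · omega
  · -- e = 3m+1, not symmetric
    obtain ⟨m, hm2, rfl⟩ : ∃ m, 2 ≤ m ∧ e = 3 * m + 1 := ⟨e / 3, by omega, by omega⟩
    have ht : (2 * (3 * m + 1) - 1) / 3 = 2 * m := by omega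
    have hs : 3 * m + 1 - 1 - (2 * m) = m := by omega
    rw [ht, hs] at h2g
    have hpoly : 2 * m * (2 * m + 1) + 2 * m ^ 2 = 6 * m ^ 2 + 2 * m := by ring
    rw [hpoly] at h2g
    have hF : frobeniusNumber (AddSubmonoid.closure
        ({3 * m + 1, 3 * m + 1 + 1, 2 * (3 * m + 1) - 1} : Set ℕ)) ≤ 6 * m ^ 2 + m - 1 := by
      apply frob_le _ he
      intro r j hr hj
      rw [cntNS] at hj
      have c1 : (j:ℤ) + 1 ≤ (r:ℤ) := by omega
      have c2 : (j:ℤ) + 2 * r + 1 ≤ 6 * (m:ℤ) + 1 := by omega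
      have c4 : (r:ℤ) ≤ 3 * (m:ℤ) := by omega
      have cm : (2:ℤ) ≤ (m:ℤ) := by omega
      have H : (j:ℤ) * (3 * m + 1) + r ≤ 6 * (m:ℤ) ^ 2 + m - 1 := by
        rcases Nat.lt_or_ge j (2 * m - 1) with hw | hw
        · have c3 : (j:ℤ) + 2 ≤ 2 * (m:ℤ) := by omega
          nlinarith [mul_nonneg (show (0:ℤ) ≤ 3 * m + 1 by linarith)
            (show (0:ℤ) ≤ 2 * m - 2 - j by linarith)]
        · have hjeq : (j:ℤ) = 2 * (m:ℤ) - 1 := by omega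
          have hr2 : (r:ℤ) ≤ 2 * (m:ℤ) := by omega
          nlinarith [hjeq]
      zify [show 1 ≤ 6 * m ^ 2 + m by nlinarith]
      push_cast
      linarith [H]
    constructor
    · intro hsym
      exfalso
      omega
    · omega
  · -- e = 3m+2, symmetric
    obtain ⟨m, hm1, rfl⟩ : ∃ m, 1 ≤ m ∧ e = 3 * m + 2 := ⟨e / 3, by omega, by omega⟩
    have ht : (2 * (3 * m + 2) - 1) / 3 = 2 * m + 1 := by omega
    have hs : 3 * m + 2 - 1 - (2 * m + 1) = m := by omega
    rw [ht, hs] at h2g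
    have hpoly : (2 * m + 1) * (2 * m + 1 + 1) + 2 * m ^ 2 = 6 * m ^ 2 + 6 * m + 2 := by ring
    rw [hpoly] at h2g
    have hFeq : frobeniusNumber (AddSubmonoid.closure
        ({3 * m + 2, 3 * m + 2 + 1, 2 * (3 * m + 2) - 1} : Set ℕ)) = 6 * m ^ 2 + 6 * m + 1 := by
      apply frob_eq _ he _ (2 * m + 1) (2 * m) (by omega)
      · rw [cntNS]; omega
      · ring
      · intro r j hr hj
        rw [cntNS] at hj
        have c1 : (j:ℤ) + 1 ≤ (r:ℤ) := by omega
        have c2 : (j:ℤ) + 2 * r + 1 ≤ 6 * (m:ℤ) + 3 := by omega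
        have cm : (1:ℤ) ≤ (m:ℤ) := by omega
        have H : (j:ℤ) * (3 * m + 2) + r ≤ 6 * (m:ℤ) ^ 2 + 6 * m + 1 := by
          nlinarith [mul_nonneg (show (0:ℤ) ≤ 2 * m + 1 by linarith)
              (show (0:ℤ) ≤ r - 1 - j by linarith),
            mul_nonneg (show (0:ℤ) ≤ m + 1 by linarith)
              (show (0:ℤ) ≤ 6 * m + 2 - 2 * r - j by linarith)]
        zify

        linarith [H]
    rw [hFeq, h2g]
    constructor
    · intro _; omega
    · intro _; omega
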